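/- For the multi-round F_Q bit commitment protocol, the maximal cheating probabilities satisfy g'_m ≤ g_{m+1} for all m ≥ 2: given any strategy S' = (s_1,...,s_m) for the symmetrized protocol P'_m, the strategy S = (s_1,...,s_m, 0̄) for P_{m+1} (where the last-round function always outputs 0) wins P_{m+1} on every input tuple (d, x_1,...,x_m) on which S' wins P'_m; hence max Pr[C'_m] ≤ max Pr[C_{m+1}]. -/
import Mathlib


open Finset

/-- Embed the inputs x₁,…,xₙ (given as a vector) into a function ℕ → F (0 elsewhere). -/
def extendVec {F : Type*} [Field F] (n : ℕ) (v : Fin n → F) : ℕ → F :=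
  fun i => if h : 1 ≤ i ∧ i ≤ n then v ⟨i - 1, by omega⟩ else 0

/-- The recursively rolled-up check value: α₀ = d, αᵢ = yᵢ − xᵢ·αᵢ₋₁. -/
def alphaRec {F : Type*} [Field F] (d : F) (x y : ℕ → F) : ℕ → F
  | 0 => d
  | i + 1 => y (i + 1) - x (i + 1) * alphaRec d x y i

/-- The committed bit viewed as a field element. -/
def bitF (F : Type*) [Field F] (d : Bool) : F := if d then 1 else 0

/-- A valid (relativistic) cheating strategy: the round-1 answer depends only on x₁, and the
round-i answer depends only on d, x₁,…,x_{i−2} and xᵢ. -/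
def ValidStrategy {F : Type*} [Field F] (S : ℕ → F → (ℕ → F) → F) : Prop :=
  (∀ d d' x, S 1 d x = S 1 d' x) ∧
  (∀ i d x x', (∀ j, j + 2 ≤ i → x j = x' j) → x i = x' i → S i d x = S i d x')

/-- Winning condition of the m-round protocol P_m: y_m = α_{m−1}. -/
def winP {F : Type*} [Field F] (m : ℕ) (S : ℕ → F → (ℕ → F) → F)
    (d : Bool) (v : Fin (m - 1) → F) : Prop :=
  let x := extendVec (m - 1) v
  let y := fun i => S i (bitF F d) x
  y m = alphaRec (bitF F d) x y (m - 1)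

/-- Winning condition of the symmetrized m-round protocol P'_m: y_m = x_m·α_{m−1}. -/
def winP' {F : Type*} [Field F] (m : ℕ) (S : ℕ → F → (ℕ → F) → F)
    (d : Bool) (v : Fin m → F) : Prop :=
  let x := extendVec m v
  let y := fun i => S i (bitF F d) x
  y m = x m * alphaRec (bitF F d) x y (m - 1)

open scoped Classical in
/-- Winning probability of a strategy in P_m, for uniform d and x₁,…,x_{m−1}. -/
noncomputable def probP (F : Type*) [Field F] [Fintype F] [DecidableEq F]
    (m : ℕ) (S : ℕ → F → (ℕ → F) → F) : ℝ :=
  ((Finset.univ.filter (fun p : Bool × (Fin (m - 1) → F) => winP m S p.1 p.2)).card : ℝ) /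
    (Fintype.card (Bool × (Fin (m - 1) → F)) : ℝ)

open scoped Classical in
/-- Winning probability of a strategy in P'_m, for uniform d and x₁,…,x_m. -/
noncomputable def probP' (F : Type*) [Field F] [Fintype F] [DecidableEq F]
    (m : ℕ) (S : ℕ → F → (ℕ → F) → F) : ℝ :=
  ((Finset.univ.filter (fun p : Bool × (Fin m → F) => winP' m S p.1 p.2)).card : ℝ) /
    (Fintype.card (Bool × (Fin m → F)) : ℝ)

/-- g_m: Alice's maximal cheating probability in P_m. -/
noncomputable def gP (F : Type*) [Field F] [Fintype F] [DecidableEq F] (m : ℕ) : ℝ :=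
  sSup {p : ℝ | ∃ S, ValidStrategy S ∧ p = probP F m S}

/-- g'_m: Alice's maximal cheating probability in P'_m. -/
noncomputable def gP' (F : Type*) [Field F] [Fintype F] [DecidableEq F] (m : ℕ) : ℝ :=
  sSup {p : ℝ | ∃ S, ValidStrategy S ∧ p = probP' F m S}

lemma alphaRec_congr {F : Type*} [Field F] (d : F) (x y y' : ℕ → F)
    (k : ℕ) (h : ∀ i, 1 ≤ i → i ≤ k → y i = y' i) :
    alphaRec d x y k = alphaRec d x y' k := by
  induction k with
  | zero => rfl
  | succ n ih =>
    simp only [alphaRec]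
    rw [h (n+1) (by omega) le_rfl, ih (fun i h1 h2 => h i h1 (by omega))]

lemma probP_nonneg (F : Type*) [Field F] [Fintype F] [DecidableEq F]
    (m : ℕ) (S : ℕ → F → (ℕ → F) → F) : 0 ≤ probP F m S := by
  classical
  unfold probP
  positivity

lemma probP_le_one (F : Type*) [Field F] [Fintype F] [DecidableEq F]
    (m : ℕ) (S : ℕ → F → (ℕ → F) → F) : probP F m S ≤ 1 := by
  classical
  unfold probP
  rw [div_le_one (by positivity)]
  exact_mod_cast Finset.card_filter_le _ _

/-- symmetrization, second inequality. Appending a final round in which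
Alice outputs 0 turns any strategy for P'_m into a strategy for P_{m+1} that wins whenever
the original one does; hence g'_m ≤ g_{m+1}. -/
theorem gP'_le_gP_succ (F : Type*) [Field F] [Fintype F] [DecidableEq F]
    (m : ℕ) (hm : 2 ≤ m) :
    (∀ S' : ℕ → F → (ℕ → F) → F, ValidStrategy S' →
      ∀ (d : Bool) (v : Fin m → F),
        winP' m S' d v →
          winP (m + 1) (fun i d x => if i = m + 1 then 0 else S' i d x) d v) ∧
    gP' F m ≤ gP F (m + 1) := by
  classical
  have main : ∀ S' : ℕ → F → (ℕ → F) → F, ValidStrategy S' →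
      ∀ (d : Bool) (v : Fin m → F),
        winP' m S' d v →
          winP (m + 1) (fun i d x => if i = m + 1 then 0 else S' i d x) d v := by
    intro S' _ d v hw
    obtain ⟨k, rfl⟩ : ∃ k, m = k + 2 := ⟨m - 2, by omega⟩
    set xx := extendVec (k + 2) v with hxx
    have hw' : S' (k+2) (bitF F d) xx = xx (k+2) * alphaRec (bitF F d) xx
        (fun i => S' i (bitF F d) xx) (k+1) := hw
    show (if k+2+1 = k+2+1 then (0:F) else S' (k+2+1) (bitF F d) xx)
        = alphaRec (bitF F d) xx
          (fun i => if i = k+2+1 then (0:F) else S' i (bitF F d) xx) (k+2)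
    rw [if_pos rfl]
    show (0:F) = (if k+2 = k+2+1 then (0:F) else S' (k+2) (bitF F d) xx)
        - xx (k+2) * alphaRec (bitF F d) xx
          (fun i => if i = k+2+1 then (0:F) else S' i (bitF F d) xx) (k+1)
    rw [if_neg (by omega), alphaRec_congr (bitF F d) xx _ (fun i => S' i (bitF F d) xx) (k+1)
        (fun i h1 h2 => by
          show (if i = k+2+1 then (0:F) else S' i (bitF F d) xx) = S' i (bitF F d) xx
          exact if_neg (by omega)), hw']
    ring
  refine ⟨main, ?_⟩
  have hBdd : BddAbove {p : ℝ | ∃ S, ValidStrategy S ∧ p = probP F (m+1) S} := by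
    refine ⟨1, ?_⟩
    rintro p ⟨S, _, rfl⟩
    exact probP_le_one F (m+1) S
  have hzero : ValidStrategy (fun (_ : ℕ) (_ : F) (_ : ℕ → F) => (0:F)) :=
    ⟨fun _ _ _ => rfl, fun _ _ _ _ _ _ => rfl⟩
  have hsup0 : (0:ℝ) ≤ gP F (m + 1) := by
    refine le_trans (probP_nonneg F (m+1) (fun _ _ _ => 0)) ?_
    exact le_csSup hBdd ⟨_, hzero, rfl⟩
  apply Real.sSup_le _ hsup0
  rintro p ⟨S', hS', rfl⟩
  set S := fun i (d : F) (x : ℕ → F) => if i = m + 1 then (0:F) else S' i d x with hSdef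
  have hSvalid : ValidStrategy S := by
    constructor
    · intro d d' xx
      simp only [hSdef]
      rw [if_neg (by omega), if_neg (by omega)]
      exact hS'.1 d d' xx
    · intro i d xx xx' h1 h2
      simp only [hSdef]
      by_cases hi : i = m + 1
      · simp [hi]
      · rw [if_neg hi, if_neg hi]
        exact hS'.2 i d xx xx' h1 h2
  have hle : probP' F m S' ≤ probP F (m+1) S := by
    unfold probP probP'
    show ((Finset.univ.filter
        (fun p : Bool × (Fin m → F) => winP' m S' p.1 p.2)).card : ℝ) /
        (Fintype.card (Bool × (Fin m → F)) : ℝ) ≤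
        ((Finset.univ.filter
        (fun p : Bool × (Fin m → F) => winP (m+1) S p.1 p.2)).card : ℝ) /
        (Fintype.card (Bool × (Fin m → F)) : ℝ)
    have hsub : (Finset.univ.filter
        (fun p : Bool × (Fin m → F) => winP' m S' p.1 p.2)) ⊆
        (Finset.univ.filter
        (fun p : Bool × (Fin m → F) => winP (m+1) S p.1 p.2)) := by
      intro p hp
      simp only [Finset.mem_filter, Finset.mem_univ, true_and] at hp ⊢
      exact main S' hS' p.1 p.2 hp
    have := Finset.card_le_card hsub
    gcongr
  exact hle.trans (le_csSup hBdd ⟨S, hSvalid, rfl⟩)
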